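/- Let K be a field of characteristic p > 0 and δ a derivation of K such that δ^{p²} = δ. Then in the Ore extension A = K[x; δ], the element z = x^{p²} − x is central. -/

import Mathlib

universe u

/-- Let `K` be a field of characteristic `p > 0` and `δ` a derivation of `K` with
`δ^{p²} = δ`.  In the Ore extension `A = K[x; δ]` — presented here as a ring `A`
containing `K` via `f`, generated by `f(K)` and an element `x` subject to
`x·a = a·x + δ(a)` — the element `z = x^{p²} - x` is central. -/
theorem ore_extension_central_element
    (p : ℕ) (hp : p.Prime) (K A : Type u) [Field K] [CharP K p] [Ring A]
    (δ : Derivation ℤ K K) (hδ : (⇑δ)^[p ^ 2] = ⇑δ)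
    (f : K →+* A) (x : A)
    (hcomm : ∀ a : K, x * f a = f a * x + f (δ a))
    (hgen : ∀ a : A, a ∈ Subring.closure (Set.range f ∪ {x})) :
    x ^ p ^ 2 - x ∈ Subring.center A := by
  have hpA : (p : A) = 0 := by
    rw [← map_natCast f, CharP.cast_eq_zero K p, map_zero]
  -- work in the endomorphism ring of A
  set L : Module.End ℤ A := LinearMap.mulLeft ℤ x with hL
  set R : Module.End ℤ A := LinearMap.mulRight ℤ x with hR
  set s : Module.End ℤ A := L - R with hs
  have hcommLR : Commute L R := LinearMap.commute_mulLeft_right x x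
  have hcommsR : Commute s R := hcommLR.sub_left (Commute.refl R)
  have hpEnd : (p : Module.End ℤ A) = 0 := by
    ext v
    show (p : ℕ) • v = 0
    rw [nsmul_eq_mul, hpA, zero_mul]
  -- L ^ (p^2) = s ^ (p^2) + R ^ (p^2)
  have hLpow : L ^ p ^ 2 = s ^ p ^ 2 + R ^ p ^ 2 := by
    have := hcommsR.add_pow_prime_pow_eq hp 2
    rw [hs, sub_add_cancel] at this
    rw [this, hpEnd, zero_mul, zero_mul, zero_mul, add_zero]
  -- s ^ n (f a) = f (δ^[n] a)
  have hsiter : ∀ (n : ℕ) (a : K), (s ^ n) (f a) = f ((⇑δ)^[n] a) := by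
    intro n
    induction n with
    | zero => intro a; simp
    | succ n ih =>
      intro a
      rw [pow_succ, Function.iterate_succ_apply]
      have hsa : s (f a) = f (δ a) := by
        show x * f a - f a * x = f (δ a)
        rw [hcomm a]; abel
      rw [Module.End.mul_apply, hsa, ih]
  -- the key commutation rule
  have key : ∀ a : K, x ^ p ^ 2 * f a = f a * x ^ p ^ 2 + f (δ a) := by
    intro a
    have h1 : (L ^ p ^ 2) (f a) = x ^ p ^ 2 * f a := by
      rw [hL, LinearMap.pow_mulLeft, LinearMap.mulLeft_apply]
    have h2 : (R ^ p ^ 2) (f a) = f a * x ^ p ^ 2 := by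
      rw [hR, LinearMap.pow_mulRight, LinearMap.mulRight_apply]
    have h3 : (s ^ p ^ 2) (f a) = f (δ a) := by rw [hsiter, hδ]
    rw [← h1, hLpow, LinearMap.add_apply, h2, h3]; abel
  -- now show centrality via closure induction
  rw [Subring.mem_center_iff]
  intro g
  refine Subring.closure_induction (fun y hy => ?_) (by simp) (by simp)
    (fun y z _ _ hy hz => by rw [add_mul, mul_add, hy, hz])
    (fun y _ hy => by rw [neg_mul, mul_neg, hy])
    (fun y z _ _ hy hz => by rw [mul_assoc, hz, ← mul_assoc, hy, mul_assoc])
    (hgen g)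
  rcases hy with ⟨a, rfl⟩ | hy
  · rw [mul_sub, sub_mul, key a, hcomm a]; abel
  · simp only [Set.mem_singleton_iff] at hy
    subst hy
    rw [mul_sub, sub_mul, ← pow_succ, ← pow_succ']
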